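/- Let 0 < α < 1, ε > 0 and U_ε(r) = ((r+ε)^{2−α} − ε^{2−α})/((2−α)(1−α)) − (ε^{1−α}/(1−α))·r for r ≥ 0. Then 0 ≤ U_ε(r) ≤ r^{2−α}/(1−α) for all r ≥ 0. -/

import Mathlib

open Real NNReal

private lemma rpow_subadd {x y p : ℝ} (hx : 0 ≤ x) (hy : 0 ≤ y) (hp0 : 0 ≤ p) (hp1 : p ≤ 1) :
    (x + y) ^ p ≤ x ^ p + y ^ p := by
  have h := NNReal.rpow_add_le_add_rpow x.toNNReal y.toNNReal hp0 hp1
  have h2 := NNReal.coe_le_coe.2 h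
  rw [← Real.toNNReal_add hx hy] at h2
  simpa [NNReal.coe_rpow, Real.coe_toNNReal _ hx, Real.coe_toNNReal _ hy,
    Real.coe_toNNReal _ (add_nonneg hx hy)] using h2

/-- The entropy density `U_ε` satisfies `0 ≤ U_ε(r) ≤ r^{2-α}/(1-α)` for all `r ≥ 0`,
uniformly in `ε`. -/
theorem entropy_density_bounds (α ε : ℝ) (hα0 : 0 < α) (hα1 : α < 1) (hε : 0 < ε)
    (r : ℝ) (hr : 0 ≤ r) :
    0 ≤ ((r + ε) ^ (2 - α) - ε ^ (2 - α)) / ((2 - α) * (1 - α)) - (ε ^ (1 - α) / (1 - α)) * r ∧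
    ((r + ε) ^ (2 - α) - ε ^ (2 - α)) / ((2 - α) * (1 - α)) - (ε ^ (1 - α) / (1 - α)) * r
      ≤ r ^ (2 - α) / (1 - α) := by
  set β : ℝ := 2 - α with hβ
  set γ : ℝ := 1 - α with hγ
  have hβ1 : (1 : ℝ) ≤ β := by simp [hβ]; linarith
  have hβpos : (0 : ℝ) < β := by linarith
  have hγpos : (0 : ℝ) < γ := by simp [hγ]; linarith
  have hγ1 : γ ≤ 1 := by simp [hγ]; linarith
  have hβγ : β = γ + 1 := by simp [hβ, hγ]; ring
  have hrε : (0 : ℝ) < r + ε := by linarith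
  -- key1 : lower tangent inequality
  have key1 : β * (ε ^ γ * r) ≤ (r + ε) ^ β - ε ^ β := by
    have hs : (-1 : ℝ) ≤ r / ε := by
      have : (0:ℝ) ≤ r / ε := by positivity
      linarith
    have h := one_add_mul_self_le_rpow_one_add hs hβ1
    have h2 : ε ^ β * (1 + β * (r / ε)) ≤ ε ^ β * (1 + r / ε) ^ β :=
      mul_le_mul_of_nonneg_left h (by positivity)
    have h3 : ε ^ β * (1 + r / ε) ^ β = (r + ε) ^ β := by
      rw [← Real.mul_rpow hε.le (by positivity)]
      congr 1
      field_simp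
      ring
    have h4 : ε ^ β * (1 + β * (r / ε)) = ε ^ β + β * (ε ^ β * ε⁻¹ * r) := by
      field_simp
    have h5 : ε ^ β * ε⁻¹ = ε ^ γ := by
      rw [← Real.rpow_neg_one ε, ← Real.rpow_add hε]
      congr 1
      rw [hβγ]; ring
    rw [h3, h4, h5] at h2
    linarith
  -- key2 : upper tangent inequality
  have key2 : (r + ε) ^ β - ε ^ β ≤ β * ((r + ε) ^ γ * r) := by
    have hs : (-1 : ℝ) ≤ -(r / (r + ε)) := by
      rw [neg_le, neg_neg]
      rw [div_le_one hrε]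
      linarith
    have h := one_add_mul_self_le_rpow_one_add hs hβ1
    have h2 : (r + ε) ^ β * (1 + β * -(r / (r + ε))) ≤ (r + ε) ^ β * (1 + -(r / (r + ε))) ^ β :=
      mul_le_mul_of_nonneg_left h (by positivity)
    have h3 : (r + ε) ^ β * (1 + -(r / (r + ε))) ^ β = ε ^ β := by
      rw [← Real.mul_rpow hrε.le (by
        rw [← sub_eq_add_neg, sub_nonneg, div_le_one hrε]; linarith)]
      congr 1
      field_simp
      ring
    have h4 : (r + ε) ^ β * (1 + β * -(r / (r + ε))) =
        (r + ε) ^ β - β * ((r + ε) ^ β * (r + ε)⁻¹ * r) := by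
      field_simp
      ring
    have h5 : (r + ε) ^ β * (r + ε)⁻¹ = (r + ε) ^ γ := by
      rw [← Real.rpow_neg_one (r + ε), ← Real.rpow_add hrε]
      congr 1
      rw [hβγ]; ring
    rw [h3, h4, h5] at h2
    linarith
  have hβγpos : (0 : ℝ) < β * γ := by positivity
  constructor
  · rw [sub_nonneg]
    have heq : ε ^ γ / γ * r = β * (ε ^ γ * r) / (β * γ) := by
      field_simp
    rw [heq]
    gcongr
  · -- upper bound
    have hsub : (r + ε) ^ γ ≤ r ^ γ + ε ^ γ := rpow_subadd hr hε.le hγpos.le hγ1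
    have hrγ : r ^ γ * r ≤ r ^ β := by
      rcases hr.eq_or_lt with h | h
      · subst h
        simp [Real.zero_rpow hβpos.ne']
      · rw [hβγ, Real.rpow_add h, Real.rpow_one]
    have key3 : (r + ε) ^ β - ε ^ β ≤ β * (r ^ β + ε ^ γ * r) := by
      calc (r + ε) ^ β - ε ^ β ≤ β * ((r + ε) ^ γ * r) := key2
        _ ≤ β * ((r ^ γ + ε ^ γ) * r) := by
            apply mul_le_mul_of_nonneg_left _ hβpos.le
            exact mul_le_mul_of_nonneg_right hsub hr
        _ = β * (r ^ γ * r + ε ^ γ * r) := by ring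
        _ ≤ β * (r ^ β + ε ^ γ * r) := by
            apply mul_le_mul_of_nonneg_left _ hβpos.le
            linarith
    have heq : (r ^ β / γ + ε ^ γ / γ * r) * (β * γ) = β * (r ^ β + ε ^ γ * r) := by
      field_simp
    rw [sub_le_iff_le_add, div_le_iff₀ hβγpos, heq]
    linarith [key3]
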